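/- The ordinary multinomials satisfy the convolution identity ⟨N,k⟩_s = Σ_{m=0}^{N} C(N,m) · ⟨m, k−m⟩_{s−1} for s ≥ 1. -/

import Mathlib

/-- The ordinary multinomial `⟨N,k⟩ₛ`: the coefficient of `T^k` in `(1+T+⋯+T^s)^N`,
with value `0` for `k < 0`. -/
noncomputable def ordMultinomial (N s : ℕ) (k : ℤ) : ℕ :=
  if 0 ≤ k then
    (((∑ i ∈ Finset.range (s + 1), (Polynomial.X : Polynomial ℕ) ^ i)) ^ N).coeff k.toNat
  else 0

theorem stmt_15 (N s : ℕ) (hs : 1 ≤ s) (k : ℤ) :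
    ordMultinomial N s k =
      ∑ m ∈ Finset.range (N + 1), N.choose m * ordMultinomial m (s - 1) (k - m) := by
  classical
  rcases le_or_gt 0 k with hk | hk
  · obtain ⟨n, rfl⟩ := Int.eq_ofNat_of_zero_le hk
    set Q : Polynomial ℕ := ∑ i ∈ Finset.range s, Polynomial.X ^ i with hQ
    have hP : (∑ i ∈ Finset.range (s + 1), (Polynomial.X : Polynomial ℕ) ^ i)
        = Q * Polynomial.X + 1 := by
      rw [hQ, Finset.sum_mul, Finset.sum_range_succ']
      simp [pow_succ]
    have hs1 : s - 1 + 1 = s := Nat.succ_pred_eq_of_pos hs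
    rw [ordMultinomial, if_pos (by positivity), hP, add_pow, Int.toNat_natCast,
      Polynomial.finset_sum_coeff]
    refine Finset.sum_congr rfl fun m hm => ?_
    rw [mul_pow, one_pow, mul_one, Polynomial.coeff_mul_natCast,
      Polynomial.coeff_mul_X_pow']
    rw [ordMultinomial, hs1]
    by_cases h : m ≤ n
    · rw [if_pos h, if_pos (by omega : (0:ℤ) ≤ (n:ℤ) - m)]
      have : ((n:ℤ) - m).toNat = n - m := by omega
      rw [this]; push_cast; rw [hQ, mul_comm]
    · rw [if_neg h, if_neg (by omega : ¬ (0:ℤ) ≤ (n:ℤ) - m)]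
      simp
  · rw [ordMultinomial, if_neg (by omega)]
    have : ∀ m ∈ Finset.range (N + 1),
        N.choose m * ordMultinomial m (s - 1) (k - m) = 0 := by
      intro m _
      rw [ordMultinomial, if_neg (by omega)]
      simp
    rw [Finset.sum_congr rfl this]
    simp
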